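/- Let k ≥ 2 and suppose the sequence (x_n)_{n≥1} ⊆ [0,1] has Poissonian k-th order correlations. Then for every t ∈ [0,1] and every s > 0, lim_{N→∞} (1/N)·#{n ≤ N : ‖x_n − t‖ ≤ s/(2N)} = 0, where ‖x‖ denotes the distance from x to the nearest integer. -/

import Mathlib

open Finset Filter MeasureTheory
open scoped Classical ENNReal NNReal

/-- Distance from `x` to the nearest integer. -/
noncomputable def nint (x : ℝ) : ℝ := |x - round x|

/-- Signed distance from `x` to the origin modulo 1. -/
noncomputable def sdist (x : ℝ) : ℝ :=
  if Int.fract x ≤ 1 / 2 then Int.fract x else Int.fract x - 1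

/-- Number of `k`-tuples of pairwise distinct indices in `{1,…,N}` whose rescaled signed
differences lie in the box `∏ r, [a r, b r]`. -/
noncomputable def corrBoxCount (x : ℕ → ℝ) (k N : ℕ) (a b : Fin (k - 1) → ℝ) : ℕ :=
  ((Fintype.piFinset fun _ : Fin k => Finset.Icc 1 N).filter fun i =>
    Function.Injective i ∧ ∀ r : Fin (k - 1),
      (N : ℝ) * sdist (x (i ⟨0, by have := r.2; omega⟩) - x (i ⟨r.1 + 1, by have := r.2; omega⟩))
        ∈ Set.Icc (a r) (b r)).card

/-- The sequence `x` (indexed by `n ≥ 1`) has Poissonian correlations of order `k`. -/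
def HasPoissonianCorr (x : ℕ → ℝ) (k : ℕ) : Prop :=
  ∀ a b : Fin (k - 1) → ℝ, (∀ r, a r ≤ b r) →
    Tendsto (fun N : ℕ => (corrBoxCount x k N a b : ℝ) / N) atTop
      (nhds (∏ r, (b r - a r)))

/-- The `k`-th order correlation function `R_k(s₁,…,s_{k-1},N)` (pairwise distinct indices). -/
noncomputable def Rcorr (x : ℕ → ℝ) (k N : ℕ) (s : Fin (k - 1) → ℝ) : ℝ :=
  (((Fintype.piFinset fun _ : Fin k => Finset.Icc 1 N).filter fun i =>
    Function.Injective i ∧ ∀ r : Fin (k - 1),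
      nint (x (i ⟨0, by have := r.2; omega⟩) - x (i ⟨r.1 + 1, by have := r.2; omega⟩))
        ≤ s r / N).card : ℝ) / N

/-- The `k`-th order correlation function `R_k^*(s₁,…,s_{k-1},N)` (indices not necessarily
distinct). -/
noncomputable def RcorrStar (x : ℕ → ℝ) (k N : ℕ) (s : Fin (k - 1) → ℝ) : ℝ :=
  (((Fintype.piFinset fun _ : Fin k => Finset.Icc 1 N).filter fun i =>
    ∀ r : Fin (k - 1),
      nint (x (i ⟨0, by have := r.2; omega⟩) - x (i ⟨r.1 + 1, by have := r.2; omega⟩))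
        ≤ s r / N).card : ℝ) / N


lemma abs_sdist (z : ℝ) : |sdist z| = nint z := by
  rw [nint, abs_sub_round_eq_min, sdist]
  split_ifs with h
  · rw [abs_of_nonneg (Int.fract_nonneg z), min_eq_left (by linarith)]
  · push_neg at h
    rw [abs_of_nonpos (by linarith [Int.fract_lt_one z]), min_eq_right (by linarith)]
    ring

lemma nint_le_abs_sub_intCast (z : ℝ) (m : ℤ) : nint z ≤ |z - m| := by
  rcases eq_or_ne m (round z) with h | h
  · rw [nint, h]
  · have h1 : (1 : ℝ) ≤ |((round z : ℝ) - m)| := by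
      have : 1 ≤ |round z - m| := Int.one_le_abs (sub_ne_zero.2 (Ne.symm h))
      exact_mod_cast this
    have key : |((round z : ℝ) - m)| ≤ |z - round z| + |z - m| := by
      calc |((round z : ℝ) - m)| = |(round z - z) + (z - m)| := by ring_nf
        _ ≤ |(round z : ℝ) - z| + |z - m| := abs_add_le _ _
        _ = |z - round z| + |z - m| := by rw [abs_sub_comm]
    have h2 := abs_sub_round z
    rw [nint]
    linarith

lemma nint_sub_le (u v : ℝ) : nint (u - v) ≤ nint u + nint v := by
  have h := nint_le_abs_sub_intCast (u - v) (round u - round v)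
  have heq : (u - v) - ((round u - round v : ℤ) : ℝ)
      = (u - round u) - (v - round v) := by push_cast; ring
  rw [heq] at h
  calc nint (u - v) ≤ |(u - round u) - (v - round v)| := h
    _ ≤ |u - round u| + |v - round v| := abs_sub _ _
    _ = nint u + nint v := rfl

lemma key_count (x : ℕ → ℝ) (k N : ℕ) (t s : ℝ) (hs : 0 < s) (hN : 1 ≤ N) :
    (((Finset.Icc 1 N).filter fun n => nint (x n - t) ≤ s / (2 * N)).card).descFactorial k
      ≤ corrBoxCount x k N (fun _ => -s) (fun _ => s) := by
  classical
  set S := (Finset.Icc 1 N).filter fun n => nint (x n - t) ≤ s / (2 * N) with hS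
  have hN0 : (0 : ℝ) < N := by exact_mod_cast hN
  have hcard : S.card.descFactorial k = (Finset.univ : Finset (Fin k ↪ ↥S)).card := by
    rw [Finset.card_univ, Fintype.card_embedding_eq, Fintype.card_fin, Fintype.card_coe]
  rw [hcard, corrBoxCount]
  apply Finset.card_le_card_of_injOn (fun e j => ((e j : ℕ)))
  · intro e _
    rw [Finset.mem_coe, Finset.mem_filter]
    refine ⟨?_, ?_, ?_⟩
    · rw [Fintype.mem_piFinset]
      intro j
      exact (Finset.mem_filter.1 (e j).2).1
    · intro a b hab
      exact e.injective (Subtype.ext hab)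
    · intro r
      have hu : nint (x ((e ⟨0, by have := r.2; omega⟩ : ↥S) : ℕ) - t) ≤ s / (2 * N) :=
        (Finset.mem_filter.1 (e ⟨0, by have := r.2; omega⟩).2).2
      have hv : nint (x ((e ⟨r.1 + 1, by have := r.2; omega⟩ : ↥S) : ℕ) - t) ≤ s / (2 * N) :=
        (Finset.mem_filter.1 (e ⟨r.1 + 1, by have := r.2; omega⟩).2).2
      set u : ℕ := ((e ⟨0, by have := r.2; omega⟩ : ↥S) : ℕ)
      set v : ℕ := ((e ⟨r.1 + 1, by have := r.2; omega⟩ : ↥S) : ℕ)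
      have htri : nint (x u - x v) ≤ s / N := by
        have h := nint_sub_le (x u - t) (x v - t)
        have heq : (x u - t) - (x v - t) = x u - x v := by ring
        rw [heq] at h
        have hsum : s / (2 * N) + s / (2 * N) = s / N := by
          field_simp
          ring
        linarith
      have habs : |(N : ℝ) * sdist (x u - x v)| ≤ s := by
        rw [abs_mul, abs_of_nonneg hN0.le, abs_sdist]
        calc (N : ℝ) * nint (x u - x v) ≤ N * (s / N) :=
              mul_le_mul_of_nonneg_left htri hN0.le
          _ = s := by field_simp
      rw [Set.mem_Icc]
      exact abs_le.1 habs
  · intro e _ e' _ h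
    apply DFunLike.ext
    intro j
    exact Subtype.ext (congrFun h j)

/-- If `(x_n)` has Poissonian `k`-th order correlations, then for every
`t ∈ [0,1]` and `s > 0`, the proportion of `n ≤ N` with `‖x_n − t‖ ≤ s/(2N)` tends to `0`. -/
theorem poissonian_implies_no_concentration
    (k : ℕ) (hk : 2 ≤ k) (x : ℕ → ℝ) (hx : ∀ n, x n ∈ Set.Icc (0 : ℝ) 1)
    (hP : HasPoissonianCorr x k) :
    ∀ t ∈ Set.Icc (0 : ℝ) 1, ∀ s : ℝ, 0 < s →
      Tendsto (fun N : ℕ =>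
          (((Finset.Icc 1 N).filter fun n => nint (x n - t) ≤ s / (2 * N)).card : ℝ) / N)
        atTop (nhds 0) := by
  intro t ht s hs
  have hP' := hP (fun _ => -s) (fun _ => s) (fun r => by linarith)
  set L : ℝ := ∏ _r : Fin (k - 1), (s - -s) with hL
  have hB : ∀ᶠ N : ℕ in atTop,
      (corrBoxCount x k N (fun _ => -s) (fun _ => s) : ℝ) / N < |L| + 1 :=
    hP'.eventually_lt_const (by linarith [le_abs_self L])
  rw [NormedAddCommGroup.tendsto_nhds_zero]
  intro ε hε
  obtain ⟨N₀, hN₀⟩ := exists_nat_gt (max ((|L| + 1) / (ε / 2) ^ 2) (2 * k / ε))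
  filter_upwards [hB, eventually_ge_atTop (max N₀ 1)] with N hbound hNge
  set A := ((Finset.Icc 1 N).filter fun n => nint (x n - t) ≤ s / (2 * N)).card with hA
  have hN1 : 1 ≤ N := le_trans (le_max_right _ _) hNge
  have hNN0 : (0 : ℝ) < N := by exact_mod_cast hN1
  have hAnn : (0 : ℝ) ≤ (A : ℝ) / N := by positivity
  rw [Real.norm_eq_abs, abs_of_nonneg hAnn]
  by_contra hcon
  push_neg at hcon
  have hεN : ε * N ≤ A := (le_div_iff₀ hNN0).mp hcon
  have hNge' : (N₀ : ℝ) ≤ N := by exact_mod_cast le_trans (le_max_left _ _) hNge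
  have hDN : (|L| + 1) / (ε / 2) ^ 2 < N :=
    lt_of_lt_of_le (lt_of_le_of_lt (le_max_left _ _) hN₀) hNge'
  have h2k : 2 * k / ε < N :=
    lt_of_lt_of_le (lt_of_le_of_lt (le_max_right _ _) hN₀) hNge'
  have hkN : (k : ℝ) ≤ ε * N / 2 := by
    rw [div_lt_iff₀ hε] at h2k
    linarith
  have h1εN : (1 : ℝ) ≤ ε * N / 2 := by
    have : (2 : ℝ) ≤ k := by exact_mod_cast hk
    linarith
  have hkey := key_count x k N t s hs hN1
  have hpow : (A - k) ^ k ≤ corrBoxCount x k N (fun _ => -s) (fun _ => s) := by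
    calc (A - k) ^ k ≤ (A + 1 - k) ^ k := Nat.pow_le_pow_left (by omega) k
      _ ≤ A.descFactorial k := Nat.pow_sub_le_descFactorial A k
      _ ≤ _ := hkey
  have hR : (((A - k : ℕ) : ℝ)) ^ k ≤ (corrBoxCount x k N (fun _ => -s) (fun _ => s) : ℝ) := by
    exact_mod_cast hpow
  have hcast : (A : ℝ) - k ≤ ((A - k : ℕ) : ℝ) := by
    rcases le_total k A with h | h
    · rw [Nat.cast_sub h]
    · have h0 : ((A - k : ℕ) : ℝ) = 0 := by
        rw [Nat.sub_eq_zero_of_le h]; norm_num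
      rw [h0]
      have : (A : ℝ) ≤ k := by exact_mod_cast h
      linarith
  have hlow : ε * N / 2 ≤ ((A - k : ℕ) : ℝ) := by linarith
  have hcorrB : (corrBoxCount x k N (fun _ => -s) (fun _ => s) : ℝ) ≤ (|L| + 1) * N := by
    rw [div_lt_iff₀ hNN0] at hbound
    linarith
  have c1 : (ε * N / 2) ^ k ≤ (|L| + 1) * N :=
    le_trans (pow_le_pow_left₀ (by linarith) hlow k) (le_trans hR hcorrB)
  have c2 : (ε * N / 2) ^ 2 ≤ (ε * N / 2) ^ k := pow_le_pow_right₀ h1εN hk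
  have hd : |L| + 1 < (N : ℝ) * (ε / 2) ^ 2 := by
    rw [div_lt_iff₀ (by positivity)] at hDN
    linarith
  nlinarith [hNN0, c2.trans c1, hd, sq_nonneg (ε * N / 2)]
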